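/- Case B of the proof of Theorem 1: Let P₁, P₂, P₃, P₄, P₅, P₆, a, b, c, d, e, f be twelve pairwise distinct points of V satisfying the 23 stitching relations. Suppose the directions P₂ − P₁ and P₄ − P₃ are both timelike, i.e. q(P₂ − P₁) < 0 and q(P₄ − P₃) < 0, and are parallel, i.e. P₄ − P₃ = κ • (P₂ − P₁) for some κ ∈ ℝ. Then q(f − P₆) = 0. -/

import Mathlib

noncomputable section

/-- Minkowski quadratic form on `ℝ³` with coordinates `(t, x, y)` indexed `0, 1, 2`. -/
def q (v : Fin 3 → ℝ) : ℝ := -(v 0)^2 + (v 1)^2 + (v 2)^2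

/-- Polar bilinear form of `q`. -/
def mbil (v w : Fin 3 → ℝ) : ℝ := -(v 0) * (w 0) + (v 1) * (w 1) + (v 2) * (w 2)

/-- The 23 stitching relations among twelve points. -/
def Stitch (P₁ P₂ P₃ P₄ P₅ P₆ a b c d e f : Fin 3 → ℝ) : Prop :=
  q (a - P₁) = 0 ∧ q (a - P₂) = 0 ∧ q (a - P₃) = 0 ∧ q (a - P₄) = 0 ∧
  q (b - P₁) = 0 ∧ q (b - P₂) = 0 ∧ q (b - P₃) = 0 ∧ q (b - P₄) = 0 ∧
  q (c - P₁) = 0 ∧ q (c - P₂) = 0 ∧ q (c - P₅) = 0 ∧ q (c - P₆) = 0 ∧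
  q (d - P₁) = 0 ∧ q (d - P₂) = 0 ∧ q (d - P₅) = 0 ∧ q (d - P₆) = 0 ∧
  q (e - P₃) = 0 ∧ q (e - P₄) = 0 ∧ q (e - P₅) = 0 ∧ q (e - P₆) = 0 ∧
  q (f - P₃) = 0 ∧ q (f - P₄) = 0 ∧ q (f - P₅) = 0

lemma qsub (x y : Fin 3 → ℝ) : q (x - y) = q x - 2 * mbil x y + q y := by
  simp [q, mbil]; ring

lemma mbil_comm (x y : Fin 3 → ℝ) : mbil x y = mbil y x := by simp [mbil]; ring

lemma mbil_sub_right (x y z : Fin 3 → ℝ) : mbil x (y - z) = mbil x y - mbil x z := by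
  simp [mbil]; ring

lemma mbil_sub_left (x y z : Fin 3 → ℝ) : mbil (x - y) z = mbil x z - mbil y z := by
  simp [mbil]; ring

lemma mbil_smul_right (r : ℝ) (x y : Fin 3 → ℝ) : mbil x (r • y) = r * mbil x y := by
  simp [mbil]; ring

lemma mbil_smul_left (r : ℝ) (x y : Fin 3 → ℝ) : mbil (r • x) y = r * mbil x y := by
  simp [mbil]; ring

lemma q_smul (r : ℝ) (x : Fin 3 → ℝ) : q (r • x) = r^2 * q x := by
  simp [q]; ring

lemma mbil_self (x : Fin 3 → ℝ) : mbil x x = q x := by simp [q, mbil]; ring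

/-- Minkowski "cross product": Euclidean cross of Ju and Jw. -/
def cr (u w : Fin 3 → ℝ) : Fin 3 → ℝ :=
  ![u 1 * w 2 - u 2 * w 1, u 0 * w 2 - u 2 * w 0, u 1 * w 0 - u 0 * w 1]

lemma q_cr (u w : Fin 3 → ℝ) : q (cr u w) = (mbil u w)^2 - q u * q w := by
  simp [cr, q, mbil]; ring

/-- Positivity of `q` on the orthogonal complement of a timelike vector. -/
lemma posdef (u z : Fin 3 → ℝ) (hu : q u < 0) (h : mbil u z = 0) (hz : z ≠ 0) : 0 < q z := by
  have hz' : z 0 ≠ 0 ∨ z 1 ≠ 0 ∨ z 2 ≠ 0 := by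
    by_contra hc
    push_neg at hc
    exact hz (funext fun i => by fin_cases i <;> simp [hc.1, hc.2.1, hc.2.2])
  simp only [q, mbil] at *
  rcases em (z 0 = 0) with h0 | h0
  · rcases hz' with h' | h' | h'
    · exact absurd h0 h'
    · have : 0 < z 1 ^ 2 := by positivity
      nlinarith [sq_nonneg (z 2), sq_nonneg (z 0), h0]
    · have : 0 < z 2 ^ 2 := by positivity
      nlinarith [sq_nonneg (z 1), sq_nonneg (z 0), h0]
  · have hz0 : 0 < z 0 ^ 2 := by positivity
    have hp : 0 < z 1 ^ 2 + z 2 ^ 2 := by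
      rcases em (z 1 = 0 ∧ z 2 = 0) with ⟨h1, h2⟩ | hne
      · exfalso
        rw [h1, h2] at h
        have hu0 : 0 < u 0 ^ 2 := by nlinarith [sq_nonneg (u 1), sq_nonneg (u 2)]
        have : u 0 * z 0 = 0 := by linarith
        rcases mul_eq_zero.mp this with h' | h'
        · nlinarith
        · exact h0 h'
      · rcases em (z 1 = 0) with h1 | h1
        · have h2 : z 2 ≠ 0 := fun h2 => hne ⟨h1, h2⟩
          have : 0 < z 2 ^ 2 := by positivity
          nlinarith [sq_nonneg (z 1)]
        · have : 0 < z 1 ^ 2 := by positivity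
          nlinarith [sq_nonneg (z 2)]
    have h' : u 0 * z 0 = u 1 * z 1 + u 2 * z 2 := by linarith
    have key : (u 0 * z 0)^2 ≤ (u 1^2 + u 2^2) * (z 1^2 + z 2^2) := by
      rw [h']
      nlinarith [sq_nonneg (u 1 * z 2 - u 2 * z 1)]
    have hu0p : 0 < u 0 ^ 2 := by nlinarith [sq_nonneg (u 1), sq_nonneg (u 2)]
    have step : u 0 ^ 2 * z 0 ^ 2 < u 0 ^ 2 * (z 1 ^ 2 + z 2 ^ 2) := by
      nlinarith [mul_lt_mul_of_pos_right (show u 1^2 + u 2^2 < u 0^2 by linarith) hp]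
    nlinarith [step, hu0p]

/-- A vector orthogonal to both `u` and `w` is proportional to `cr u w`. -/
lemma ortho_scaling (u w z : Fin 3 → ℝ) (h1 : mbil u z = 0) (h2 : mbil w z = 0) :
    ∀ i, q (cr u w) * z i = mbil z (cr u w) * cr u w i := by
  have n0e : cr u w 0 = u 1 * w 2 - u 2 * w 1 := by simp [cr]
  have n1e : cr u w 1 = u 0 * w 2 - u 2 * w 0 := by simp [cr]
  have n2e : cr u w 2 = u 1 * w 0 - u 0 * w 1 := by simp [cr]
  simp only [mbil] at h1 h2
  intro i
  fin_cases i
  · show q (cr u w) * z 0 = mbil z (cr u w) * cr u w 0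
    simp only [q, mbil, n0e, n1e, n2e]
    linear_combination ((u 0 * w 2 - u 2 * w 0) * u 2 - (u 1 * w 0 - u 0 * w 1) * u 1) * h2 +
      (-(u 0 * w 2 - u 2 * w 0) * w 2 + (u 1 * w 0 - u 0 * w 1) * w 1) * h1
  · show q (cr u w) * z 1 = mbil z (cr u w) * cr u w 1
    simp only [q, mbil, n0e, n1e, n2e]
    linear_combination ((u 1 * w 2 - u 2 * w 1) * u 2 - (u 1 * w 0 - u 0 * w 1) * u 0) * h2 +
      (-(u 1 * w 2 - u 2 * w 1) * w 2 + (u 1 * w 0 - u 0 * w 1) * w 0) * h1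
  · show q (cr u w) * z 2 = mbil z (cr u w) * cr u w 2
    simp only [q, mbil, n0e, n1e, n2e]
    linear_combination (-(u 1 * w 2 - u 2 * w 1) * u 1 + (u 0 * w 2 - u 2 * w 0) * u 0) * h2 +
      ((u 1 * w 2 - u 2 * w 1) * w 1 - (u 0 * w 2 - u 2 * w 0) * w 0) * h1

/-- Core lemma: two distinct nonzero chords on the circle, orthogonal to `w`, force `w = 0`. -/
lemma core (u w g z₁ z₂ : Fin 3 → ℝ)
    (hu : q u < 0) (huw : mbil u w = 0)
    (h1u : mbil u z₁ = 0) (h2u : mbil u z₂ = 0)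
    (h1w : mbil w z₁ = 0) (h2w : mbil w z₂ = 0)
    (e1 : q z₁ + 2 * mbil z₁ g = 0) (e2 : q z₂ + 2 * mbil z₂ g = 0)
    (hz1 : z₁ ≠ 0) (hz2 : z₂ ≠ 0) (hne : z₁ ≠ z₂) : w = 0 := by
  by_contra hw
  have hqw : 0 < q w := posdef u w hu huw hw
  have hqn : 0 < q (cr u w) := by
    rw [q_cr, huw]
    nlinarith [mul_pos (neg_pos.mpr hu) hqw]
  set n := cr u w with hn
  have hqn0 : q n ≠ 0 := ne_of_gt hqn
  have s1 := ortho_scaling u w z₁ h1u h1w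
  have s2 := ortho_scaling u w z₂ h2u h2w
  set α := mbil z₁ n / q n with hαdef
  set β := mbil z₂ n / q n with hβdef
  have hz1n : z₁ = α • n := by
    funext i
    have := s1 i
    have : z₁ i = mbil z₁ n * n i / q n := by field_simp; linarith [s1 i]
    rw [this, hαdef]
    simp [Pi.smul_apply, smul_eq_mul]
    ring
  have hz2n : z₂ = β • n := by
    funext i
    have : z₂ i = mbil z₂ n * n i / q n := by field_simp; linarith [s2 i]
    rw [this, hβdef]
    simp [Pi.smul_apply, smul_eq_mul]
    ring
  have hα : α ≠ 0 := by
    intro h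
    apply hz1
    rw [hz1n, h, zero_smul]
  have hβ : β ≠ 0 := by
    intro h
    apply hz2
    rw [hz2n, h, zero_smul]
  rw [hz1n] at e1
  rw [hz2n] at e2
  rw [q_smul, mbil_smul_left] at e1 e2
  have eα : α * q n + 2 * mbil n g = 0 := by
    apply mul_left_cancel₀ hα
    rw [mul_zero]
    linear_combination e1
  have eβ : β * q n + 2 * mbil n g = 0 := by
    apply mul_left_cancel₀ hβ
    rw [mul_zero]
    linear_combination e2
  have hαβ : α = β := by
    have h : (α - β) * q n = 0 := by linarith
    rcases mul_eq_zero.mp h with h' | h'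
    · linarith
    · exact absurd h' hqn0
  exact hne (by rw [hz1n, hz2n, hαβ])

/-- Case B of the proof of Theorem 1: lines 12 and 34 are timelike and parallel. -/
theorem caseB
    (P₁ P₂ P₃ P₄ P₅ P₆ a b c d e f : Fin 3 → ℝ)
    (hdist : List.Pairwise (· ≠ ·) [P₁, P₂, P₃, P₄, P₅, P₆, a, b, c, d, e, f])
    (hst : Stitch P₁ P₂ P₃ P₄ P₅ P₆ a b c d e f)
    (h12 : q (P₂ - P₁) < 0) (h34 : q (P₄ - P₃) < 0)
    (hpar : ∃ κ : ℝ, P₄ - P₃ = κ • (P₂ - P₁)) :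
    q (f - P₆) = 0 := by
  obtain ⟨ha1, ha2, ha3, ha4, hb1, hb2, hb3, hb4, hc1, hc2, hc5, hc6,
    hd1, hd2, hd5, hd6, he3, he4, he5, he6, hf3, hf4, hf5⟩ := hst
  -- distinctness facts
  simp only [List.pairwise_cons, List.mem_cons, List.mem_singleton,
    List.not_mem_nil, forall_eq_or_imp, forall_eq, List.Pairwise.nil] at hdist
  have hcd : c ≠ d := by tauto
  have hce : c ≠ e := by tauto
  have hde : d ≠ e := by tauto
  -- abbreviations
  have key : ∀ x P Q : Fin 3 → ℝ, q (x - P) = 0 → q (x - Q) = 0 →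
      2 * mbil x (Q - P) = q Q - q P := by
    intro x P Q hP hQ
    rw [qsub] at hP hQ
    rw [mbil_sub_right]
    linarith
  have Hau := key a P₁ P₂ ha1 ha2
  have Hcu := key c P₁ P₂ hc1 hc2
  have Hdu := key d P₁ P₂ hd1 hd2
  have Hav := key a P₃ P₄ ha3 ha4
  have Hev := key e P₃ P₄ he3 he4
  have Hfv := key f P₃ P₄ hf3 hf4
  obtain ⟨κ, hκ⟩ := hpar
  have hκ0 : κ ≠ 0 := by
    intro h
    rw [h, zero_smul] at hκ
    rw [hκ] at h34
    simp [q] at h34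
  rw [hκ, mbil_smul_right] at Hav Hev Hfv
  have Heu : mbil e (P₂ - P₁) = mbil c (P₂ - P₁) := by
    apply mul_left_cancel₀ hκ0
    linear_combination (Hev - Hav) / 2 + κ / 2 * (Hau - Hcu)
  have Hfu : mbil f (P₂ - P₁) = mbil c (P₂ - P₁) := by
    apply mul_left_cancel₀ hκ0
    linear_combination (Hfv - Hav) / 2 + κ / 2 * (Hau - Hcu)
  have Hdu' : mbil d (P₂ - P₁) = mbil c (P₂ - P₁) := by linarith
  have Hcw := key c P₅ P₆ hc5 hc6
  have Hdw := key d P₅ P₆ hd5 hd6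
  have Hew := key e P₅ P₆ he5 he6
  -- reduce the goal
  suffices Hfw : mbil f (P₆ - P₅) = mbil c (P₆ - P₅) by
    rw [qsub] at hf5 ⊢
    have h1 := mbil_sub_right f P₆ P₅
    have h2 := mbil_sub_right c P₆ P₅
    linarith
  -- set up the core lemma
  set u : Fin 3 → ℝ := P₂ - P₁ with hudef
  have hqu : q u ≠ 0 := ne_of_lt h12
  set ν : ℝ := mbil u (P₆ - P₅) / q u with hνdef
  set w : Fin 3 → ℝ := (P₆ - P₅) - ν • u with hwdef
  have huw : mbil u w = 0 := by
    rw [hwdef, mbil_sub_right, mbil_smul_right, mbil_self, hνdef]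
    field_simp
    ring
  have hudc : mbil u (d - c) = 0 := by
    rw [mbil_sub_right, mbil_comm u d, mbil_comm u c]
    linarith
  have huec : mbil u (e - c) = 0 := by
    rw [mbil_sub_right, mbil_comm u e, mbil_comm u c]
    linarith
  have hufc : mbil u (f - c) = 0 := by
    rw [mbil_sub_right, mbil_comm u f, mbil_comm u c]
    linarith
  have hwz : ∀ z : Fin 3 → ℝ, mbil u z = 0 → mbil w z = 0 →
      mbil z (P₆ - P₅) = 0 → True := fun _ _ _ _ => trivial
  have hwdc : mbil w (d - c) = 0 := by
    rw [hwdef, mbil_sub_left, mbil_smul_left, hudc, mul_zero, sub_zero,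
      mbil_comm, mbil_sub_left]
    linarith
  have hwec : mbil w (e - c) = 0 := by
    rw [hwdef, mbil_sub_left, mbil_smul_left, huec, mul_zero, sub_zero,
      mbil_comm, mbil_sub_left]
    linarith
  have circ : ∀ x y P : Fin 3 → ℝ, q (x - P) = 0 → q (y - P) = 0 →
      q (y - x) + 2 * mbil (y - x) (x - P) = 0 := by
    intro x y P hx hy
    simp only [q, mbil, Pi.sub_apply] at *
    linear_combination hy - hx
  have e1 := circ c d P₅ hc5 hd5
  have e2 := circ c e P₅ hc5 he5
  have hz1 : d - c ≠ 0 := sub_ne_zero_of_ne (Ne.symm hcd)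
  have hz2 : e - c ≠ 0 := sub_ne_zero_of_ne (Ne.symm hce)
  have hne : d - c ≠ e - c := fun h => hde (sub_left_inj.mp h)
  have hw0 : w = 0 := core u w (c - P₅) (d - c) (e - c) h12 huw hudc huec hwdc hwec e1 e2 hz1 hz2 hne
  -- conclude
  have hw' : (P₆ - P₅ : Fin 3 → ℝ) = ν • u := by
    have := sub_eq_zero.mp hw0
    exact this
  rw [hw', mbil_smul_right, mbil_smul_right]
  rw [mbil_comm f u, mbil_comm c u] at *
  rw [Hfu]
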